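/- Universal and fair prompt model checking coincide on the prompt Muller fragment: for every LTS L and every φ ∈ L(F_p^∞), there exists k ∈ ℕ such that every initialized run ρ of L satisfies (ρ,k) ⊨ φ, if and only if there exists k ∈ ℕ such that μ_L({ρ : (ρ,k) ⊨ φ}) = 1, where μ_L is the fair-coin measure of L. -/

import Mathlib

open scoped Classical
open MeasureTheory

/-- A labelled transition system: a finite set of states `S`, an initial state,
a transition relation in which every state has at least one successor, and a
labeling of states by sets of atomic propositions. -/
structure LTS (S AP : Type) where
  init : S
  T : S → S → Prop
  lbl : S → Set AP
  succ_nonempty : ∀ s : S, ∃ t : S, T s t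

variable {S AP : Type}

/-- A run of an LTS: an infinite sequence of states following the transitions. -/
def IsRun (L : LTS S AP) (ρ : ℕ → S) : Prop := ∀ i : ℕ, L.T (ρ i) (ρ (i + 1))

/-- The shifted run `ρ[i..]`. -/
def shift (ρ : ℕ → S) (i : ℕ) : ℕ → S := fun n => ρ (n + i)

/-- Formulas of the prompt Muller fragment `L(F_p^∞)`:
`φ ::= α | ¬α | φ ∨ φ | φ ∧ φ | F_p^∞ φ`. -/
inductive PM (AP : Type) : Type where
  | pos : AP → PM AP
  | neg : AP → PM AP
  | or : PM AP → PM AP → PM AP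
  | and : PM AP → PM AP → PM AP
  | finf : PM AP → PM AP

/-- Satisfaction `(ρ, k) ⊨ φ` of a prompt Muller formula by a run at bound `k`. -/
def Sat (L : LTS S AP) : PM AP → (ℕ → S) → ℕ → Prop
  | .pos a, ρ, _ => a ∈ L.lbl (ρ 0)
  | .neg a, ρ, _ => a ∉ L.lbl (ρ 0)
  | .or φ ψ, ρ, k => Sat L φ ρ k ∨ Sat L ψ ρ k
  | .and φ ψ, ρ, k => Sat L φ ρ k ∧ Sat L ψ ρ k
  | .finf φ, ρ, k => ∀ i : ℕ, ∃ j ≤ k, Sat L φ (shift ρ (i + j)) k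

/-- The probability of one fair-coin step from `s` to `t`: the successor is chosen
uniformly at random among the successors of `s`. -/
noncomputable def stepProb (L : LTS S AP) (s t : S) : ENNReal :=
  if L.T s t then ((Nat.card {u : S // L.T s u} : ENNReal))⁻¹ else 0

/-- The product of the step probabilities along a finite sequence of states. -/
noncomputable def chainProb (L : LTS S AP) : List S → ENNReal
  | [] => 1
  | [_] => 1
  | s :: t :: rest => stepProb L s t * chainProb L (t :: rest)

/-- The cylinder `Cyl w` of infinite sequences extending the finite word `w`. -/
def Cyl (w : List S) : Set (ℕ → S) := {ρ | ∀ i : Fin w.length, ρ i = w.get i}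

/-- The fair-coin probability of the cylinder of a finite word: `1` on the initial
state, then the product of the uniform step probabilities. -/
noncomputable def pathProb (L : LTS S AP) (w : List S) : ENNReal :=
  (if w.head? = some L.init then 1 else 0) * chainProb L w

/-- `μ` is the fair-coin measure of `L`: the trajectory (Ionescu–Tulcea) law of the
Markov chain started at `L.init` that moves from each state to a uniformly chosen
successor; it is the unique probability measure on `S^ℕ` (product σ-algebra, `S`
discrete) giving every nonempty cylinder its path probability. -/
def IsFairMeasure [MeasurableSpace S] (L : LTS S AP) (μ : Measure (ℕ → S)) : Prop :=
  IsProbabilityMeasure μ ∧ ∀ w : List S, w ≠ [] → μ (Cyl w) = pathProb L w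


/- ### Auxiliary lemmas -/

lemma stepProb_ne_zero (L : LTS S AP) {s t : S} (h : L.T s t) : stepProb L s t ≠ 0 := by
  unfold stepProb
  rw [if_pos h]
  exact ENNReal.inv_ne_zero.mpr (ENNReal.natCast_ne_top _)

lemma chainProb_ne_zero (L : LTS S AP) : ∀ w : List S, List.Chain' L.T w → chainProb L w ≠ 0
  | [], _ => by simp [chainProb]
  | [s], _ => by simp [chainProb]
  | s :: t :: r, h => by
    rw [List.Chain', List.isChain_cons_cons] at h
    show stepProb L s t * chainProb L (t :: r) ≠ 0
    exact mul_ne_zero (stepProb_ne_zero L h.1) (chainProb_ne_zero L (t :: r) h.2)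

lemma chainProb_eq_zero (L : LTS S AP) : ∀ w : List S, ¬ List.Chain' L.T w → chainProb L w = 0
  | [], h => absurd List.isChain_nil h
  | [s], h => absurd (List.isChain_singleton s) h
  | s :: t :: r, h => by
    rw [List.Chain', List.isChain_cons_cons, not_and_or] at h
    show stepProb L s t * chainProb L (t :: r) = 0
    rcases h with h | h
    · rw [stepProb, if_neg h, zero_mul]
    · rw [chainProb_eq_zero L (t :: r) h, mul_zero]

lemma measurable_shift (m : ℕ) [MeasurableSpace S] :
    Measurable (fun ρ : ℕ → S => shift ρ m) :=
  measurable_pi_lambda _ (fun n => measurable_pi_apply (n + m))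

lemma satMeasurable [MeasurableSpace S] [DiscreteMeasurableSpace S]
    (L : LTS S AP) (φ : PM AP) (k : ℕ) :
    MeasurableSet {ρ : ℕ → S | Sat L φ ρ k} := by
  induction φ with
  | pos a =>
    have h : {ρ : ℕ → S | Sat L (.pos a) ρ k}
        = (fun ρ : ℕ → S => ρ 0) ⁻¹' {s : S | a ∈ L.lbl s} := rfl
    rw [h]
    exact (measurable_pi_apply 0) MeasurableSet.of_discrete
  | neg a =>
    have h : {ρ : ℕ → S | Sat L (.neg a) ρ k}
        = (fun ρ : ℕ → S => ρ 0) ⁻¹' {s : S | a ∉ L.lbl s} := rfl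
    rw [h]
    exact (measurable_pi_apply 0) MeasurableSet.of_discrete
  | or φ ψ ih1 ih2 =>
    have h : {ρ : ℕ → S | Sat L (.or φ ψ) ρ k}
        = {ρ : ℕ → S | Sat L φ ρ k} ∪ {ρ : ℕ → S | Sat L ψ ρ k} := rfl
    rw [h]; exact ih1.union ih2
  | and φ ψ ih1 ih2 =>
    have h : {ρ : ℕ → S | Sat L (.and φ ψ) ρ k}
        = {ρ : ℕ → S | Sat L φ ρ k} ∩ {ρ : ℕ → S | Sat L ψ ρ k} := rfl
    rw [h]; exact ih1.inter ih2
  | finf φ ih =>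
    have h : {ρ : ℕ → S | Sat L (.finf φ) ρ k}
        = ⋂ i : ℕ, ⋃ j ∈ Finset.range (k+1),
            (fun ρ : ℕ → S => shift ρ (i + j)) ⁻¹' {ρ : ℕ → S | Sat L φ ρ k} := by
      ext ρ
      simp [Sat, Nat.lt_succ_iff]
    rw [h]
    exact MeasurableSet.iInter fun i =>
      MeasurableSet.biUnion (Finset.range (k+1)).countable_toSet
        (fun j _ => (measurable_shift (i+j)) ih)

/-- Closedness of the satisfaction set: if a run is approximated on arbitrarily long
prefixes by runs satisfying `φ` at bound `k`, then it satisfies `φ` at bound `k`. -/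
lemma sat_of_approx (L : LTS S AP) (φ : PM AP) (k : ℕ) :
    ∀ ρ : ℕ → S, (∀ N : ℕ, ∃ σ : ℕ → S, (∀ m ≤ N, σ m = ρ m) ∧ Sat L φ σ k) →
      Sat L φ ρ k := by
  induction φ with
  | pos a =>
    intro ρ h
    obtain ⟨σ, hag, hs⟩ := h 0
    have h0 := hag 0 le_rfl
    show a ∈ L.lbl (ρ 0)
    rw [← h0]; exact hs
  | neg a =>
    intro ρ h
    obtain ⟨σ, hag, hs⟩ := h 0
    have h0 := hag 0 le_rfl
    show a ∉ L.lbl (ρ 0)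
    rw [← h0]; exact hs
  | or φ ψ ih1 ih2 =>
    intro ρ h
    by_cases hc : ∀ N : ℕ, ∃ σ : ℕ → S, (∀ m ≤ N, σ m = ρ m) ∧ Sat L φ σ k
    · exact Or.inl (ih1 ρ hc)
    · push_neg at hc
      obtain ⟨N0, hN0⟩ := hc
      refine Or.inr (ih2 ρ fun N => ?_)
      obtain ⟨σ, hag, hs⟩ := h (max N N0)
      have h1 : ∀ m ≤ N0, σ m = ρ m := fun m hm => hag m (le_trans hm (le_max_right _ _))
      have h2 : ∀ m ≤ N, σ m = ρ m := fun m hm => hag m (le_trans hm (le_max_left _ _))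
      rcases hs with hφ | hψ
      · exact absurd hφ (hN0 σ h1)
      · exact ⟨σ, h2, hψ⟩
  | and φ ψ ih1 ih2 =>
    intro ρ h
    constructor
    · refine ih1 ρ fun N => ?_
      obtain ⟨σ, hag, hs⟩ := h N
      exact ⟨σ, hag, hs.1⟩
    · refine ih2 ρ fun N => ?_
      obtain ⟨σ, hag, hs⟩ := h N
      exact ⟨σ, hag, hs.2⟩
  | finf φ ih =>
    intro ρ h i
    have H : ∀ N : ℕ, ∃ σ : ℕ → S, ∃ j : ℕ,
        (∀ m ≤ N, σ m = ρ m) ∧ j ≤ k ∧ Sat L φ (shift σ (i + j)) k := by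
      intro N
      obtain ⟨σ, hag, hs⟩ := h N
      obtain ⟨j, hj, hsj⟩ := hs i
      exact ⟨σ, j, hag, hj, hsj⟩
    choose σf jf hag hjk hsat using H
    have hpig : ∃ j : ℕ, j ≤ k ∧ ∀ N : ℕ, ∃ N' ≥ N, jf N' = j := by
      by_contra hcon
      push_neg at hcon
      have hfin : ∀ j : Fin (k+1), ∃ N : ℕ, ∀ N' ≥ N, jf N' ≠ (j : ℕ) := by
        intro j
        exact hcon (j : ℕ) (Nat.lt_succ_iff.mp j.isLt)
      choose g hg using hfin
      exact hg ⟨jf (Finset.univ.sup g), Nat.lt_succ_of_le (hjk _)⟩ _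
        (Finset.le_sup (Finset.mem_univ _)) rfl
    obtain ⟨j, hj, hinf⟩ := hpig
    refine ⟨j, hj, ih (shift ρ (i + j)) ?_⟩
    intro M
    obtain ⟨N', hN', hjN'⟩ := hinf (M + (i + j))
    refine ⟨shift (σf N') (i + j), ?_, ?_⟩
    · intro m hm
      show σf N' (m + (i + j)) = ρ (m + (i + j))
      exact hag N' _ (le_trans (by omega) hN')
    · have hx := hsat N'
      rw [hjN'] at hx
      exact hx

theorem universal_iff_fair [Fintype S] [MeasurableSpace S] [DiscreteMeasurableSpace S]
    (L : LTS S AP) (φ : PM AP) (μ : Measure (ℕ → S)) (hμ : IsFairMeasure L μ) :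
    (∃ k : ℕ, ∀ ρ : ℕ → S, IsRun L ρ → ρ 0 = L.init → Sat L φ ρ k) ↔
    (∃ k : ℕ, μ {ρ : ℕ → S | Sat L φ ρ k} = 1) := by
  obtain ⟨hprob, hcyl⟩ := hμ
  haveI := hprob
  constructor
  · rintro ⟨k, huniv⟩
    refine ⟨k, ?_⟩
    have ha : μ {ρ : ℕ → S | ρ 0 ≠ L.init} = 0 := by
      have hsub : {ρ : ℕ → S | ρ 0 ≠ L.init}
          ⊆ ⋃ s : {s : S // s ≠ L.init}, Cyl [s.val] := by
        intro ρ hρ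
        refine Set.mem_iUnion.mpr ⟨⟨ρ 0, hρ⟩, ?_⟩
        intro i
        have hi : (i : ℕ) = 0 := Nat.lt_one_iff.mp i.isLt
        simp [Cyl, hi]
      refine measure_mono_null hsub (measure_iUnion_null fun s => ?_)
      rw [hcyl [s.val] (by simp)]
      unfold pathProb
      rw [if_neg (by simpa using s.2), zero_mul]
    have hb : ∀ i : ℕ, μ {ρ : ℕ → S | ¬ L.T (ρ i) (ρ (i+1))} = 0 := by
      intro i
      have hsub : {ρ : ℕ → S | ¬ L.T (ρ i) (ρ (i+1))}
          ⊆ ⋃ v : {v : Fin (i+2) → S //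
              ¬ L.T (v ⟨i, by omega⟩) (v ⟨i+1, by omega⟩)},
            Cyl (List.ofFn v.val) := by
        intro ρ hρ
        refine Set.mem_iUnion.mpr ⟨⟨fun m => ρ (m : ℕ), hρ⟩, ?_⟩
        intro m
        rw [List.get_ofFn]
        rfl
      refine measure_mono_null hsub (measure_iUnion_null fun v => ?_)
      rw [hcyl _ (by simp)]
      unfold pathProb
      have hz : chainProb L (List.ofFn v.val) = 0 := by
        refine chainProb_eq_zero L _ ?_
        rw [List.Chain', List.isChain_iff_getElem]
        push_neg
        refine ⟨i, by simp, ?_⟩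
        rw [List.getElem_ofFn, List.getElem_ofFn]
        exact v.2
      rw [hz, mul_zero]
    have hcompl : μ {ρ : ℕ → S | Sat L φ ρ k}ᶜ = 0 := by
      have hsub : {ρ : ℕ → S | Sat L φ ρ k}ᶜ
          ⊆ {ρ : ℕ → S | ρ 0 ≠ L.init} ∪ ⋃ i : ℕ, {ρ : ℕ → S | ¬ L.T (ρ i) (ρ (i+1))} := by
        intro ρ hρ
        rw [Set.mem_union]
        by_contra hc
        push_neg at hc
        obtain ⟨h1, h2⟩ := hc
        simp only [Set.mem_setOf_eq, not_not] at h1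
        simp only [Set.mem_iUnion, Set.mem_setOf_eq, not_exists, not_not] at h2
        exact hρ (huniv ρ h2 h1)
      exact measure_mono_null hsub
        (measure_union_null ha (measure_iUnion_null hb))
    exact (prob_compl_eq_zero_iff (satMeasurable L φ k)).mp hcompl
  · rintro ⟨k, hk⟩
    refine ⟨k, fun ρ hrun hinit => ?_⟩
    apply sat_of_approx
    intro N
    set w : List S := List.ofFn (fun m : Fin (N+1) => ρ (m : ℕ)) with hw
    have hwne : w ≠ [] := by simp [hw]
    have hμw : μ (Cyl w) ≠ 0 := by
      rw [hcyl w hwne]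
      unfold pathProb
      rw [if_pos (by simp [hw, List.ofFn_succ, hinit]), one_mul]
      refine chainProb_ne_zero L w ?_
      rw [List.Chain', List.isChain_iff_getElem]
      intro idx hidx
      rw [List.getElem_ofFn, List.getElem_ofFn]
      exact hrun idx
    have hcne : (Cyl w ∩ {ρ : ℕ → S | Sat L φ ρ k}).Nonempty := by
      by_contra hemp
      rw [Set.not_nonempty_iff_eq_empty] at hemp
      have hsubc : Cyl w ⊆ {ρ : ℕ → S | Sat L φ ρ k}ᶜ := by
        intro x hx hsx
        exact Set.eq_empty_iff_forall_notMem.mp hemp x ⟨hx, hsx⟩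
      have h0 : μ {ρ : ℕ → S | Sat L φ ρ k}ᶜ = 0 :=
        (prob_compl_eq_zero_iff (satMeasurable L φ k)).mpr hk
      exact hμw (le_antisymm (le_trans (measure_mono hsubc) h0.le) (zero_le))
    obtain ⟨σ, hσw, hσs⟩ := hcne
    refine ⟨σ, ?_, hσs⟩
    intro m hm
    have hmem := hσw ⟨m, by simp [hw]; omega⟩
    rw [List.get_ofFn] at hmem
    exact hmem
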